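/- arXiv:2410.14557 — 2 statements merged into one kernel-verified Lean document; each statement's English description precedes it below -/
import Mathlib

section
/- Let U > 0 and let g : [−U/2, U/2] → ℝ be concave with g ∈ W^{2,1}([−U/2, U/2]), g(−U/2) = g(U/2) = 0, and g' ∈ L²([−U/2, U/2]). Let s : ℝ → [−U/2, U/2] be measurable and non-increasing with ∫_ℝ z (s(z) − s₀(z)) dz < ∞, where s₀(z) = U/2 for z ≤ 0 and s₀(z) = −U/2 for z > 0. Then ∫_ℝ g(s(z)) dz ≤ C_# (∫_ℝ z (s(z) − s₀(z)) dz)^{1/2}, where C_# = (2 ∫_{−U/2}^{U/2} (g'(s))² ds)^{1/2}. -/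
/- STATEMENT 5: the scale-invariant interpolation inequality:
for concave g ∈ W^{2,1}([−U/2,U/2]) vanishing at the endpoints with g' ∈ L²,
and any measurable non-increasing s : ℝ → [−U/2,U/2] with finite moment
∫ z (s − s₀) dz, one has
∫ g(s(z)) dz ≤ C_# (∫ z (s(z) − s₀(z)) dz)^{1/2},
with C_# = (2 ∫_{−U/2}^{U/2} (g')² ds)^{1/2}. -/

open MeasureTheory

noncomputable section

/-- the reference profile s₀ -/
def s0 (U z : ℝ) : ℝ := if z ≤ 0 then U / 2 else -U / 2

open scoped ENNReal NNReal

lemma ennreal_two_mul_le (a b : ℝ≥0∞) : 2 * (a * b) ≤ a ^ 2 + b ^ 2 := by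
  rcases eq_or_ne a ⊤ with ha | ha
  · rcases eq_or_ne b 0 with hb | hb
    · simp [ha, hb]
    · simp [ha, hb, ENNReal.top_mul, ENNReal.pow_eq_top_iff]
  rcases eq_or_ne b ⊤ with hb | hb
  · rcases eq_or_ne a 0 with ha0 | ha0
    · simp [hb, ha0]
    · simp [hb, ha0, ENNReal.mul_top, ENNReal.pow_eq_top_iff]
  lift a to ℝ≥0 using ha
  lift b to ℝ≥0 using hb
  have h : (2 : ℝ≥0) * (a * b) ≤ a ^ 2 + b ^ 2 := by
    have h2 : (2 * (a * b) : ℝ) ≤ ((a : ℝ) ^ 2 + (b : ℝ) ^ 2) := by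
      nlinarith [sq_nonneg ((a : ℝ) - b)]
    have := NNReal.coe_le_coe (r₁ := 2 * (a * b)) (r₂ := a ^ 2 + b ^ 2)
    rw [← this] at *
    push_cast
    linarith [h2]
  exact_mod_cast h

lemma ennreal_add_sq_le (a b : ℝ≥0∞) : (a + b) ^ 2 ≤ 2 * (a ^ 2 + b ^ 2) := by
  have h : (a + b) ^ 2 = a ^ 2 + b ^ 2 + 2 * (a * b) := by ring
  rw [h]
  have h2 := ennreal_two_mul_le a b
  calc a ^ 2 + b ^ 2 + 2 * (a * b) ≤ a ^ 2 + b ^ 2 + (a ^ 2 + b ^ 2) :=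
        add_le_add le_rfl h2
    _ = 2 * (a ^ 2 + b ^ 2) := by ring

lemma lint_triangle (A : ℝ) (hA : 0 ≤ A) :
    ∫⁻ t in Set.Ioc 0 A, ENNReal.ofReal (A - t) = ENNReal.ofReal (A ^ 2 / 2) := by
  have hint : IntegrableOn (fun t => A - t) (Set.Ioc 0 A) :=
    (continuous_const.sub continuous_id).integrableOn_Ioc
  have hnn : 0 ≤ᵐ[volume.restrict (Set.Ioc 0 A)] fun t => A - t := by
    filter_upwards [ae_restrict_mem measurableSet_Ioc] with t ht
    have h2 := ht.2
    show (0:ℝ) ≤ A - t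
    linarith
  rw [← ofReal_integral_eq_lintegral_ofReal hint hnn]
  congr 1
  rw [← intervalIntegral.integral_of_le hA]
  rw [intervalIntegral.integral_sub (intervalIntegrable_const (c := A))
    intervalIntegral.intervalIntegrable_id]
  simp [integral_id]
  ring

lemma bathtub_pos (S : Set ℝ) (hS : MeasurableSet S) (hsub : S ⊆ Set.Ici 0) :
    volume S ^ 2 ≤ 2 * ∫⁻ z in S, (‖z‖₊ : ℝ≥0∞) := by
  have henorm : ∫⁻ z in S, (‖z‖₊ : ℝ≥0∞) = ∫⁻ z in S, ENNReal.ofReal z := by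
    apply lintegral_congr_ae
    filter_upwards [ae_restrict_mem hS] with z hz
    rw [← enorm_eq_nnnorm, Real.enorm_eq_ofReal (hsub hz)]
  rw [henorm]
  rcases eq_or_ne (volume S) ⊤ with htop | hfin
  · -- RHS is infinite
    have h1 : volume (S ∩ Set.Ici 1) = ⊤ := by
      by_contra h
      have hle : volume S ≤ volume (S ∩ Set.Ici 1) + volume (Set.Ico (0:ℝ) 1) := by
        refine le_trans (measure_mono (fun z hz => ?_)) (measure_union_le (S ∩ Set.Ici 1) (Set.Ico (0:ℝ) 1))
        rcases le_or_gt 1 z with h1 | h1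
        · exact Or.inl ⟨hz, h1⟩
        · exact Or.inr ⟨hsub hz, h1⟩
      rw [htop] at hle
      have : volume (S ∩ Set.Ici 1) + volume (Set.Ico (0:ℝ) 1) ≠ ⊤ := by
        apply ENNReal.add_ne_top.2
        exact ⟨h, by simp [Real.volume_Ico]⟩
      exact this (top_le_iff.1 hle)
    have hinf : (⊤ : ℝ≥0∞) ≤ ∫⁻ z in S, ENNReal.ofReal z := by
      calc (⊤ : ℝ≥0∞) = 1 * volume (S ∩ Set.Ici 1) := by rw [h1]; simp
        _ = ∫⁻ _ in S ∩ Set.Ici 1, (1 : ℝ≥0∞) := by rw [setLIntegral_const, one_mul]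
        _ ≤ ∫⁻ z in S ∩ Set.Ici 1, ENNReal.ofReal z := by
            apply setLIntegral_mono' (hS.inter measurableSet_Ici)
            intro z hz
            simpa using ENNReal.one_le_ofReal.2 hz.2
        _ ≤ ∫⁻ z in S, ENNReal.ofReal z :=
            lintegral_mono_set Set.inter_subset_left
    rw [top_le_iff.1 hinf]
    simp [htop]
  · set A := (volume S).toReal with hA
    have hA0 : 0 ≤ A := ENNReal.toReal_nonneg
    have hSA : volume S = ENNReal.ofReal A := by rw [hA, ENNReal.ofReal_toReal hfin]
    -- layer cake
    have hlc : ∫⁻ z in S, ENNReal.ofReal z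
        = ∫⁻ t in Set.Ioi (0:ℝ), volume.restrict S {a : ℝ | t < a} := by
      apply lintegral_eq_lintegral_meas_lt
      · filter_upwards [ae_restrict_mem hS] with z hz using hsub hz
      · exact measurable_id.aemeasurable
    have hkey : ∀ t : ℝ, 0 < t → ENNReal.ofReal (A - t) ≤ volume.restrict S {a : ℝ | t < a} := by
      intro t ht
      rw [Measure.restrict_apply' hS]
      have hsplit : volume S ≤ volume ({a : ℝ | t < a} ∩ S) + ENNReal.ofReal t := by
        have : S ⊆ ({a : ℝ | t < a} ∩ S) ∪ Set.Icc 0 t := by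
          intro z hz
          rcases lt_or_ge t z with h | h
          · exact Or.inl ⟨h, hz⟩
          · exact Or.inr ⟨hsub hz, h⟩
        calc volume S ≤ volume (({a : ℝ | t < a} ∩ S) ∪ Set.Icc 0 t) := measure_mono this
          _ ≤ volume ({a : ℝ | t < a} ∩ S) + volume (Set.Icc 0 t) := measure_union_le _ _
          _ = volume ({a : ℝ | t < a} ∩ S) + ENNReal.ofReal t := by
              rw [Real.volume_Icc]; norm_num
      calc ENNReal.ofReal (A - t) = ENNReal.ofReal A - ENNReal.ofReal t :=
            (ENNReal.ofReal_sub A ht.le)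
        _ = volume S - ENNReal.ofReal t := by rw [hSA]
        _ ≤ volume ({a : ℝ | t < a} ∩ S) := by
            apply tsub_le_iff_right.2
            exact hsplit
    have hge : ENNReal.ofReal (A ^ 2 / 2) ≤ ∫⁻ z in S, ENNReal.ofReal z := by
      rw [hlc, ← lint_triangle A hA0]
      calc ∫⁻ t in Set.Ioc 0 A, ENNReal.ofReal (A - t)
          ≤ ∫⁻ t in Set.Ioc 0 A, volume.restrict S {a : ℝ | t < a} := by
            apply setLIntegral_mono' measurableSet_Ioc
            intro t ht
            exact hkey t ht.1
        _ ≤ ∫⁻ t in Set.Ioi 0, volume.restrict S {a : ℝ | t < a} :=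
            lintegral_mono_set Set.Ioc_subset_Ioi_self
    calc volume S ^ 2 = ENNReal.ofReal A ^ 2 := by rw [hSA]
      _ = ENNReal.ofReal (A ^ 2) := by rw [← ENNReal.ofReal_pow hA0]
      _ = 2 * ENNReal.ofReal (A ^ 2 / 2) := by
          rw [← ENNReal.ofReal_ofNat, ← ENNReal.ofReal_mul (by norm_num)]
          congr 1
          ring
      _ ≤ 2 * ∫⁻ z in S, ENNReal.ofReal z := by
          exact mul_le_mul_right hge 2

lemma bathtub_neg (S : Set ℝ) (hS : MeasurableSet S) (hsub : S ⊆ Set.Iic 0) :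
    volume S ^ 2 ≤ 2 * ∫⁻ z in S, (‖z‖₊ : ℝ≥0∞) := by
  have henorm : ∫⁻ z in S, (‖z‖₊ : ℝ≥0∞) = ∫⁻ z in S, ENNReal.ofReal (-z) := by
    apply lintegral_congr_ae
    filter_upwards [ae_restrict_mem hS] with z hz
    rw [← enorm_eq_nnnorm, Real.enorm_eq_ofReal_abs, abs_of_nonpos (hsub hz)]
  rw [henorm]
  rcases eq_or_ne (volume S) ⊤ with htop | hfin
  · have h1 : volume (S ∩ Set.Iic (-1)) = ⊤ := by
      by_contra h
      have hle : volume S ≤ volume (S ∩ Set.Iic (-1)) + volume (Set.Ioc (-1:ℝ) 0) := by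
        refine le_trans (measure_mono (fun z hz => ?_))
          (measure_union_le (S ∩ Set.Iic (-1)) (Set.Ioc (-1:ℝ) 0))
        rcases le_or_gt z (-1) with h1 | h1
        · exact Or.inl ⟨hz, h1⟩
        · exact Or.inr ⟨h1, hsub hz⟩
      rw [htop] at hle
      have : volume (S ∩ Set.Iic (-1)) + volume (Set.Ioc (-1:ℝ) 0) ≠ ⊤ := by
        apply ENNReal.add_ne_top.2
        exact ⟨h, by simp [Real.volume_Ioc]⟩
      exact this (top_le_iff.1 hle)
    have hinf : (⊤ : ℝ≥0∞) ≤ ∫⁻ z in S, ENNReal.ofReal (-z) := by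
      calc (⊤ : ℝ≥0∞) = 1 * volume (S ∩ Set.Iic (-1)) := by rw [h1]; simp
        _ = ∫⁻ _ in S ∩ Set.Iic (-1), (1 : ℝ≥0∞) := by rw [setLIntegral_const, one_mul]
        _ ≤ ∫⁻ z in S ∩ Set.Iic (-1), ENNReal.ofReal (-z) := by
            apply setLIntegral_mono' (hS.inter measurableSet_Iic)
            intro z hz
            simpa using ENNReal.one_le_ofReal.2 (by have := Set.mem_Iic.1 hz.2; linarith)
        _ ≤ ∫⁻ z in S, ENNReal.ofReal (-z) :=
            lintegral_mono_set Set.inter_subset_left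
    rw [top_le_iff.1 hinf]
    simp [htop]
  · set A := (volume S).toReal with hA
    have hA0 : 0 ≤ A := ENNReal.toReal_nonneg
    have hSA : volume S = ENNReal.ofReal A := by rw [hA, ENNReal.ofReal_toReal hfin]
    have hlc : ∫⁻ z in S, ENNReal.ofReal (-z)
        = ∫⁻ t in Set.Ioi (0:ℝ), volume.restrict S {a : ℝ | t < -a} := by
      apply lintegral_eq_lintegral_meas_lt
      · filter_upwards [ae_restrict_mem hS] with z hz
        simpa using hsub hz
      · exact measurable_neg.aemeasurable
    have hkey : ∀ t : ℝ, 0 < t →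
        ENNReal.ofReal (A - t) ≤ volume.restrict S {a : ℝ | t < -a} := by
      intro t ht
      rw [Measure.restrict_apply' hS]
      have hsplit : volume S ≤ volume ({a : ℝ | t < -a} ∩ S) + ENNReal.ofReal t := by
        have hcov : S ⊆ ({a : ℝ | t < -a} ∩ S) ∪ Set.Icc (-t) 0 := by
          intro z hz
          rcases lt_or_ge t (-z) with h | h
          · exact Or.inl ⟨h, hz⟩
          · exact Or.inr ⟨by linarith, hsub hz⟩
        calc volume S ≤ volume (({a : ℝ | t < -a} ∩ S) ∪ Set.Icc (-t) 0) := measure_mono hcov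
          _ ≤ volume ({a : ℝ | t < -a} ∩ S) + volume (Set.Icc (-t) 0) := measure_union_le _ _
          _ = volume ({a : ℝ | t < -a} ∩ S) + ENNReal.ofReal t := by
              rw [Real.volume_Icc]; norm_num
      calc ENNReal.ofReal (A - t) = ENNReal.ofReal A - ENNReal.ofReal t :=
            (ENNReal.ofReal_sub A ht.le)
        _ = volume S - ENNReal.ofReal t := by rw [hSA]
        _ ≤ volume ({a : ℝ | t < -a} ∩ S) := tsub_le_iff_right.2 hsplit
    have hge : ENNReal.ofReal (A ^ 2 / 2) ≤ ∫⁻ z in S, ENNReal.ofReal (-z) := by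
      rw [hlc, ← lint_triangle A hA0]
      calc ∫⁻ t in Set.Ioc 0 A, ENNReal.ofReal (A - t)
          ≤ ∫⁻ t in Set.Ioc 0 A, volume.restrict S {a : ℝ | t < -a} := by
            apply setLIntegral_mono' measurableSet_Ioc
            intro t ht
            exact hkey t ht.1
        _ ≤ ∫⁻ t in Set.Ioi 0, volume.restrict S {a : ℝ | t < -a} :=
            lintegral_mono_set Set.Ioc_subset_Ioi_self
    calc volume S ^ 2 = ENNReal.ofReal A ^ 2 := by rw [hSA]
      _ = ENNReal.ofReal (A ^ 2) := by rw [← ENNReal.ofReal_pow hA0]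
      _ = 2 * ENNReal.ofReal (A ^ 2 / 2) := by
          rw [← ENNReal.ofReal_ofNat, ← ENNReal.ofReal_mul (by norm_num)]
          congr 1
          ring
      _ ≤ 2 * ∫⁻ z in S, ENNReal.ofReal (-z) := mul_le_mul_right hge 2


theorem interpolation_inequality
    (U : ℝ) (hU : 0 < U)
    (g g' g'' : ℝ → ℝ)
    -- g is concave on [−U/2, U/2]
    (hconc : ConcaveOn ℝ (Set.Icc (-(U/2)) (U/2)) g)
    -- g ∈ W^{2,1}([−U/2, U/2]): g' is the derivative of g, g'' the (weak)
    -- derivative of g', and g'' is integrable on the interval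
    (hg' : ∀ ξ ∈ Set.Icc (-(U/2)) (U/2),
      HasDerivWithinAt g (g' ξ) (Set.Icc (-(U/2)) (U/2)) ξ)
    (hg'' : ∀ ξ ∈ Set.Icc (-(U/2)) (U/2),
      HasDerivWithinAt g' (g'' ξ) (Set.Icc (-(U/2)) (U/2)) ξ)
    (hg''int : MeasureTheory.IntegrableOn g'' (Set.Icc (-(U/2)) (U/2)))
    -- g vanishes at the endpoints
    (hg_left : g (-(U/2)) = 0) (hg_right : g (U/2) = 0)
    -- g' ∈ L²([−U/2, U/2])
    (hg'L2 : MeasureTheory.IntegrableOn (fun ξ => (g' ξ) ^ 2) (Set.Icc (-(U/2)) (U/2)))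
    -- s : ℝ → [−U/2, U/2] is measurable and non-increasing
    (s : ℝ → ℝ) (hs_meas : Measurable s) (hs_anti : Antitone s)
    (hs_range : ∀ z : ℝ, s z ∈ Set.Icc (-(U/2)) (U/2))
    -- finite moment ∫ z (s − s₀) dz < ∞ (the integrand is nonnegative)
    (hmom : MeasureTheory.Integrable (fun z => z * (s z - s0 U z))) :
    ∫ z : ℝ, g (s z) ≤
      Real.sqrt (2 * ∫ ξ in (-(U/2))..(U/2), (g' ξ) ^ 2) *
        Real.sqrt (∫ z : ℝ, z * (s z - s0 U z)) := by

  classical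
  have hu : -(U/2) ≤ U/2 := by linarith
  have hgcont : ContinuousOn g (Set.Icc (-(U/2)) (U/2)) :=
    fun x hx => (hg' x hx).continuousWithinAt
  have hg'cont : ContinuousOn g' (Set.Icc (-(U/2)) (U/2)) :=
    fun x hx => (hg'' x hx).continuousWithinAt
  -- measurable extension of g'
  set G : ℝ → ℝ := fun σ => if h : σ ∈ Set.Icc (-(U/2)) (U/2) then g' σ else 0 with hGdef
  have hGIcc : ∀ σ ∈ Set.Icc (-(U/2)) (U/2), G σ = g' σ := fun σ hσ => dif_pos hσ
  have hGmeas : Measurable G := by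
    rw [hGdef]
    exact Measurable.dite (ContinuousOn.restrict hg'cont).measurable
      measurable_const measurableSet_Icc
  -- FTC
  have hFTC : ∀ x ∈ Set.Icc (-(U/2)) (U/2),
      (∫ σ in Set.Ioc (-(U/2)) x, g' σ) = g x ∧ (∫ σ in Set.Ioc x (U/2), g' σ) = - g x := by
    have key : ∀ x y : ℝ, x ∈ Set.Icc (-(U/2)) (U/2) → y ∈ Set.Icc (-(U/2)) (U/2) → x ≤ y →
        (∫ σ in x..y, g' σ) = g y - g x := by
      intro x y hx hy hxy
      apply intervalIntegral.integral_eq_sub_of_hasDeriv_right_of_le hxy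
      · exact hgcont.mono (Set.Icc_subset_Icc hx.1 hy.2)
      · intro t ht
        have htIcc : t ∈ Set.Icc (-(U/2)) (U/2) := ⟨le_trans hx.1 ht.1.le, le_trans ht.2.le hy.2⟩
        refine (hg' t htIcc).mono_of_mem_nhdsWithin ?_
        exact Icc_mem_nhdsGT_of_mem ⟨htIcc.1, lt_of_lt_of_le ht.2 hy.2⟩
      · exact (hg'cont.mono (Set.Icc_subset_Icc hx.1 hy.2)).intervalIntegrable_of_Icc hxy
    intro x hx
    constructor
    · rw [← intervalIntegral.integral_of_le hx.1]
      rw [key (-(U/2)) x (Set.left_mem_Icc.2 hu) hx hx.1, hg_left, sub_zero]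
    · rw [← intervalIntegral.integral_of_le hx.2]
      rw [key x (U/2) hx (Set.right_mem_Icc.2 hu) hx.2, hg_right, zero_sub]
  -- the sets
  set A : ℝ → Set ℝ := fun σ => {z | z ≤ 0 ∧ s z < σ ∧ σ ≤ U/2} with hAdef
  set B : ℝ → Set ℝ := fun σ => {z | 0 < z ∧ -(U/2) < σ ∧ σ ≤ s z} with hBdef
  have hAmeas : ∀ σ, MeasurableSet (A σ) := by
    intro σ
    exact (measurableSet_le measurable_id measurable_const).inter
      (((measurableSet_lt hs_meas measurable_const)).inter
        (MeasurableSet.const _))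
  have hBmeas : ∀ σ, MeasurableSet (B σ) := by
    intro σ
    exact (measurableSet_lt measurable_const measurable_id).inter
      ((MeasurableSet.const _).inter (measurableSet_le measurable_const hs_meas))
  set a : ℝ → ℝ≥0∞ := fun σ => volume (A σ) with hadef
  set b : ℝ → ℝ≥0∞ := fun σ => volume (B σ) with hbdef
  have hameas : Measurable a := by
    have hT : MeasurableSet {q : ℝ × ℝ | q.2 ≤ 0 ∧ s q.2 < q.1 ∧ q.1 ≤ U/2} := by
      exact (measurableSet_le measurable_snd measurable_const).inter
        ((measurableSet_lt (hs_meas.comp measurable_snd) measurable_fst).inter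
          (measurableSet_le measurable_fst measurable_const))
    have := measurable_measure_prodMk_left (ν := volume) hT
    exact this
  have hbmeas : Measurable b := by
    have hT : MeasurableSet {q : ℝ × ℝ | 0 < q.2 ∧ -(U/2) < q.1 ∧ q.1 ≤ s q.2} := by
      exact (measurableSet_lt measurable_const measurable_snd).inter
        ((measurableSet_lt measurable_const measurable_fst).inter
          (measurableSet_le measurable_fst (hs_meas.comp measurable_snd)))
    have := measurable_measure_prodMk_left (ν := volume) hT
    exact this
  -- nonnegativity of moment integrand
  have hmomnn : ∀ z : ℝ, 0 ≤ z * (s z - s0 U z) := by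
    intro z
    rcases le_or_gt z 0 with hz | hz
    · have h1 : s z - s0 U z ≤ 0 := by
        have := (hs_range z).2
        simp only [s0, if_pos hz]
        linarith
      have := mul_nonneg (neg_nonneg.2 hz) (neg_nonneg.2 h1)
      nlinarith
    · have h1 : 0 ≤ s z - s0 U z := by
        have := (hs_range z).1
        simp only [s0, if_neg (not_le.2 hz)]
        linarith
      exact mul_nonneg hz.le h1
  set M : ℝ := ∫ z : ℝ, z * (s z - s0 U z) with hMdef
  have hM0 : 0 ≤ M := integral_nonneg hmomnn
  -- the ψ kernel and the moment identity
  set ψ : ℝ → ℝ → ℝ≥0∞ := fun z σ =>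
    if (z ≤ 0 ∧ s z < σ ∧ σ ≤ U/2) ∨ (0 < z ∧ -(U/2) < σ ∧ σ ≤ s z)
    then (‖z‖₊ : ℝ≥0∞) else 0 with hψdef
  have hψmeas : Measurable (Function.uncurry ψ) := by
    apply Measurable.ite
    · apply MeasurableSet.union
      · exact (measurableSet_le measurable_fst measurable_const).inter
          ((measurableSet_lt (hs_meas.comp measurable_fst) measurable_snd).inter
            (measurableSet_le measurable_snd measurable_const))
      · exact (measurableSet_lt measurable_const measurable_fst).inter
          ((measurableSet_lt measurable_const measurable_snd).inter
            (measurableSet_le measurable_snd (hs_meas.comp measurable_fst)))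
    · exact measurable_fst.enorm
    · exact measurable_const
  have hψinner : ∀ z : ℝ, (∫⁻ σ, ψ z σ) = ENNReal.ofReal (z * (s z - s0 U z)) := by
    intro z
    rcases le_or_gt z 0 with hz | hz
    · have hfun : (fun σ => ψ z σ)
          = (Set.Ioc (s z) (U/2)).indicator (fun _ => (‖z‖₊ : ℝ≥0∞)) := by
        funext σ
        by_cases hσ : σ ∈ Set.Ioc (s z) (U/2)
        · rw [Set.indicator_of_mem hσ]
          exact if_pos (Or.inl ⟨hz, hσ.1, hσ.2⟩)
        · rw [Set.indicator_of_notMem hσ]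
          apply if_neg
          rintro (⟨_, h1, h2⟩ | ⟨h1, _, _⟩)
          · exact hσ ⟨h1, h2⟩
          · exact absurd hz (not_le.2 h1)
      rw [hfun, lintegral_indicator measurableSet_Ioc, setLIntegral_const, Real.volume_Ioc]
      rw [← enorm_eq_nnnorm, Real.enorm_eq_ofReal_abs, abs_of_nonpos hz,
        ← ENNReal.ofReal_mul (by linarith : (0:ℝ) ≤ -z)]
      congr 1
      simp only [s0, if_pos hz]
      ring
    · have hfun : (fun σ => ψ z σ)
          = (Set.Ioc (-(U/2)) (s z)).indicator (fun _ => (‖z‖₊ : ℝ≥0∞)) := by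
        funext σ
        by_cases hσ : σ ∈ Set.Ioc (-(U/2)) (s z)
        · rw [Set.indicator_of_mem hσ]
          exact if_pos (Or.inr ⟨hz, hσ.1, hσ.2⟩)
        · rw [Set.indicator_of_notMem hσ]
          apply if_neg
          rintro (⟨h1, _, _⟩ | ⟨_, h1, h2⟩)
          · exact absurd hz (not_lt.2 h1)
          · exact hσ ⟨h1, h2⟩
      rw [hfun, lintegral_indicator measurableSet_Ioc, setLIntegral_const, Real.volume_Ioc]
      rw [← enorm_eq_nnnorm, Real.enorm_eq_ofReal_abs, abs_of_pos hz,
        ← ENNReal.ofReal_mul hz.le]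
      congr 1
      simp only [s0, if_neg (not_le.2 hz)]
      ring
  have hψswap : (∫⁻ σ, ∫⁻ z, ψ z σ) = ENNReal.ofReal M := by
    rw [← lintegral_lintegral_swap hψmeas.aemeasurable]
    simp_rw [hψinner]
    rw [← ofReal_integral_eq_lintegral_ofReal hmom (Filter.Eventually.of_forall hmomnn)]
  have hψz : ∀ σ : ℝ, (∫⁻ z, ψ z σ) = (∫⁻ z in A σ, (‖z‖₊ : ℝ≥0∞)) + ∫⁻ z in B σ, (‖z‖₊ : ℝ≥0∞) := by
    intro σ
    have hfun : (fun z => ψ z σ)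
        = fun z => (A σ).indicator (fun w => (‖w‖₊ : ℝ≥0∞)) z
            + (B σ).indicator (fun w => (‖w‖₊ : ℝ≥0∞)) z := by
      funext z
      by_cases h1 : z ∈ A σ
      · have h2 : z ∉ B σ := fun h2 => absurd h1.1 (not_le.2 h2.1)
        rw [Set.indicator_of_mem h1, Set.indicator_of_notMem h2, add_zero]
        exact if_pos (Or.inl h1)
      · by_cases h2 : z ∈ B σ
        · rw [Set.indicator_of_notMem h1, Set.indicator_of_mem h2, zero_add]
          exact if_pos (Or.inr h2)
        · rw [Set.indicator_of_notMem h1, Set.indicator_of_notMem h2, add_zero]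
          apply if_neg
          rintro (h | h)
          · exact h1 h
          · exact h2 h
    rw [hfun, lintegral_add_left (measurable_nnnorm.coe_nnreal_ennreal.indicator (hAmeas σ)),
      lintegral_indicator (hAmeas σ), lintegral_indicator (hBmeas σ)]
  have hab2M : (∫⁻ σ, (a σ ^ 2 + b σ ^ 2)) ≤ 2 * ENNReal.ofReal M := by
    have hmono : ∀ σ : ℝ, a σ ^ 2 + b σ ^ 2 ≤ 2 * ∫⁻ z, ψ z σ := by
      intro σ
      rw [hψz σ, mul_add]
      exact add_le_add (bathtub_neg (A σ) (hAmeas σ) (fun z hz => hz.1))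
        (bathtub_pos (B σ) (hBmeas σ) (fun z hz => le_of_lt hz.1))
    calc (∫⁻ σ, (a σ ^ 2 + b σ ^ 2)) ≤ ∫⁻ σ, 2 * ∫⁻ z, ψ z σ := lintegral_mono hmono
      _ = 2 * ∫⁻ σ, ∫⁻ z, ψ z σ :=
          lintegral_const_mul 2 (Measurable.lintegral_prod_left hψmeas)
      _ = 2 * ENNReal.ofReal M := by rw [hψswap]
  -- finiteness a.e.
  have hfinab : ∀ᵐ σ : ℝ, a σ < ⊤ ∧ b σ < ⊤ := by
    have hne : (∫⁻ σ, (a σ ^ 2 + b σ ^ 2)) ≠ ⊤ := by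
      refine ne_of_lt (lt_of_le_of_lt hab2M ?_)
      exact ENNReal.mul_lt_top (by norm_num) ENNReal.ofReal_lt_top
    have h := ae_lt_top ((hameas.pow_const 2).add (hbmeas.pow_const 2)) hne
    filter_upwards [h] with σ hσ
    constructor
    · by_contra htop
      rw [not_lt, top_le_iff] at htop
      rw [Pi.add_apply, htop, ENNReal.top_pow (by norm_num)] at hσ
      exact lt_irrefl _ (lt_of_le_of_lt le_top (lt_of_le_of_lt (le_add_right le_rfl) hσ))
    · by_contra htop
      rw [not_lt, top_le_iff] at htop
      rw [Pi.add_apply, htop, ENNReal.top_pow (by norm_num)] at hσ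
      exact lt_irrefl _ (lt_of_le_of_lt le_top (lt_of_le_of_lt (le_add_left le_rfl) hσ))
  -- the kernel F
  set F : ℝ → ℝ → ℝ := fun z σ =>
    (if z ≤ 0 ∧ s z < σ ∧ σ ≤ U/2 then -G σ else 0) +
    (if 0 < z ∧ -(U/2) < σ ∧ σ ≤ s z then G σ else 0) with hFdef
  have hFmeas : Measurable (Function.uncurry F) := by
    apply Measurable.add
    · apply Measurable.ite
      · exact (measurableSet_le measurable_fst measurable_const).inter
          ((measurableSet_lt (hs_meas.comp measurable_fst) measurable_snd).inter
            (measurableSet_le measurable_snd measurable_const))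
      · exact (hGmeas.comp measurable_snd).neg
      · exact measurable_const
    · apply Measurable.ite
      · exact (measurableSet_lt measurable_const measurable_fst).inter
          ((measurableSet_lt measurable_const measurable_snd).inter
            (measurableSet_le measurable_snd (hs_meas.comp measurable_fst)))
      · exact hGmeas.comp measurable_snd
      · exact measurable_const
  -- L² fact for G
  set X : ℝ := ∫ σ in Set.Icc (-(U/2)) (U/2), (g' σ)^2 with hXdef
  have hX0 : 0 ≤ X :=
    setIntegral_nonneg measurableSet_Icc (fun σ _ => sq_nonneg _)
  have hG2 : (∫⁻ σ, ((‖G σ‖₊ : ℝ≥0∞)) ^ 2) = ENNReal.ofReal X := by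
    have hfun : (fun σ => ((‖G σ‖₊ : ℝ≥0∞)) ^ 2)
        = (Set.Icc (-(U/2)) (U/2)).indicator (fun σ => ENNReal.ofReal ((g' σ)^2)) := by
      funext σ
      by_cases hσ : σ ∈ Set.Icc (-(U/2)) (U/2)
      · rw [Set.indicator_of_mem hσ, hGIcc σ hσ, ← enorm_eq_nnnorm, Real.enorm_eq_ofReal_abs,
          ← ENNReal.ofReal_pow (abs_nonneg _), sq_abs]
      · rw [Set.indicator_of_notMem hσ]
        have hG0 : G σ = 0 := dif_neg hσ
        rw [hG0]
        simp
    rw [hfun, lintegral_indicator measurableSet_Icc,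
      ← ofReal_integral_eq_lintegral_ofReal hg'L2 ?_]
    filter_upwards with σ using sq_nonneg _
  -- Hölder
  have hconj : Real.HolderConjugate 2 2 := Real.HolderConjugate.two_two
  have hHolder : ∀ c : ℝ → ℝ≥0∞, Measurable c →
      (∫⁻ σ, (‖G σ‖₊ : ℝ≥0∞) * c σ)
        ≤ (∫⁻ σ, ((‖G σ‖₊ : ℝ≥0∞)) ^ 2) ^ (1/2 : ℝ) * (∫⁻ σ, c σ ^ 2) ^ (1/2 : ℝ) := by
    intro c hc
    have h := ENNReal.lintegral_mul_le_Lp_mul_Lq volume hconj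
      hGmeas.enorm.aemeasurable hc.aemeasurable
    simp only [Pi.mul_apply] at h
    have h2 : ∀ x : ℝ≥0∞, x ^ (2:ℝ) = x ^ (2:ℕ) := by
      intro x
      rw [show (2:ℝ) = ((2:ℕ):ℝ) by norm_num, ENNReal.rpow_natCast]
    simp only [h2] at h
    exact h
  have habfin : (∫⁻ σ, (a σ + b σ) ^ 2) ≤ 4 * ENNReal.ofReal M := by
    calc (∫⁻ σ, (a σ + b σ) ^ 2) ≤ ∫⁻ σ, 2 * (a σ ^ 2 + b σ ^ 2) :=
          lintegral_mono fun σ => ennreal_add_sq_le _ _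
      _ = 2 * ∫⁻ σ, (a σ ^ 2 + b σ ^ 2) :=
          lintegral_const_mul 2 ((hameas.pow_const 2).add (hbmeas.pow_const 2))
      _ ≤ 2 * (2 * ENNReal.ofReal M) := mul_le_mul_right hab2M 2
      _ = 4 * ENNReal.ofReal M := by ring
  -- pointwise description of ‖F‖
  have heqF : ∀ z σ : ℝ, (‖F z σ‖₊ : ℝ≥0∞)
      = (A σ).indicator (fun _ => (‖G σ‖₊ : ℝ≥0∞)) z
        + (B σ).indicator (fun _ => (‖G σ‖₊ : ℝ≥0∞)) z := by
    intro z σ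
    by_cases h1 : z ≤ 0 ∧ s z < σ ∧ σ ≤ U/2
    · have h1m : z ∈ A σ := h1
      have h2 : ¬(0 < z ∧ -(U/2) < σ ∧ σ ≤ s z) := fun h2 => absurd h1.1 (not_le.2 h2.1)
      have h2m : z ∉ B σ := h2
      rw [Set.indicator_of_mem h1m, Set.indicator_of_notMem h2m, add_zero]
      have hF : F z σ = -G σ := by
        show (if z ≤ 0 ∧ s z < σ ∧ σ ≤ U/2 then -G σ else 0)
          + (if 0 < z ∧ -(U/2) < σ ∧ σ ≤ s z then G σ else 0) = -G σ
        rw [if_pos h1, if_neg h2, add_zero]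
      rw [hF, nnnorm_neg]
    · have h1m : z ∉ A σ := h1
      by_cases h2 : 0 < z ∧ -(U/2) < σ ∧ σ ≤ s z
      · have h2m : z ∈ B σ := h2
        rw [Set.indicator_of_notMem h1m, Set.indicator_of_mem h2m, zero_add]
        have hF : F z σ = G σ := by
          show (if z ≤ 0 ∧ s z < σ ∧ σ ≤ U/2 then -G σ else 0)
            + (if 0 < z ∧ -(U/2) < σ ∧ σ ≤ s z then G σ else 0) = G σ
          rw [if_pos h2, if_neg h1, zero_add]
        rw [hF]
      · have h2m : z ∉ B σ := h2
        rw [Set.indicator_of_notMem h1m, Set.indicator_of_notMem h2m, add_zero]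
        have hF : F z σ = 0 := by
          show (if z ≤ 0 ∧ s z < σ ∧ σ ≤ U/2 then -G σ else 0)
            + (if 0 < z ∧ -(U/2) < σ ∧ σ ≤ s z then G σ else 0) = 0
          rw [if_neg h1, if_neg h2, add_zero]
        rw [hF]
        simp
  have hFz : ∀ σ : ℝ, (∫⁻ z, (‖F z σ‖₊ : ℝ≥0∞)) = (‖G σ‖₊ : ℝ≥0∞) * (a σ + b σ) := by
    intro σ
    simp_rw [heqF]
    rw [lintegral_add_left (measurable_const.indicator (hAmeas σ)),
      lintegral_indicator (hAmeas σ), lintegral_indicator (hBmeas σ),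
      setLIntegral_const, setLIntegral_const, mul_add]
  -- integrability of F on the product
  have hFint : Integrable (Function.uncurry F) (volume.prod volume) := by
    refine ⟨hFmeas.aestronglyMeasurable, ?_⟩
    have hmeasn : AEMeasurable (fun p : ℝ × ℝ => (‖Function.uncurry F p‖₊ : ℝ≥0∞))
        (volume.prod volume) := hFmeas.enorm.aemeasurable
    show (∫⁻ p, (‖Function.uncurry F p‖₊ : ℝ≥0∞) ∂(volume.prod volume)) < ⊤
    rw [lintegral_prod _ hmeasn]
    have hswap : (∫⁻ z, ∫⁻ σ, (‖F z σ‖₊ : ℝ≥0∞)) = ∫⁻ σ, ∫⁻ z, (‖F z σ‖₊ : ℝ≥0∞) :=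
      lintegral_lintegral_swap hmeasn
    calc (∫⁻ z, ∫⁻ σ, (‖F z σ‖₊ : ℝ≥0∞)) = ∫⁻ σ, ∫⁻ z, (‖F z σ‖₊ : ℝ≥0∞) := hswap
      _ = ∫⁻ σ, (‖G σ‖₊ : ℝ≥0∞) * (a σ + b σ) := by simp_rw [hFz]
      _ ≤ (∫⁻ σ, ((‖G σ‖₊ : ℝ≥0∞)) ^ 2) ^ (1/2 : ℝ) * (∫⁻ σ, (a σ + b σ) ^ 2) ^ (1/2 : ℝ) :=
          hHolder _ (hameas.add hbmeas)
      _ < ⊤ := by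
          apply ENNReal.mul_lt_top
          · apply ENNReal.rpow_lt_top_of_nonneg (by norm_num)
            rw [hG2]
            exact ENNReal.ofReal_ne_top
          · apply ENNReal.rpow_lt_top_of_nonneg (by norm_num)
            exact (lt_of_le_of_lt habfin
              (ENNReal.mul_lt_top (by norm_num) ENNReal.ofReal_lt_top)).ne
  -- the inner integral identity (FTC)
  have key_inner : ∀ z : ℝ, (∫ σ, F z σ) = g (s z) := by
    intro z
    rcases le_or_gt z 0 with hz | hz
    · have hfun : (fun σ => F z σ) = (Set.Ioc (s z) (U/2)).indicator (fun σ => -g' σ) := by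
        funext σ
        by_cases hσ : σ ∈ Set.Ioc (s z) (U/2)
        · rw [Set.indicator_of_mem hσ]
          show (if z ≤ 0 ∧ s z < σ ∧ σ ≤ U/2 then -G σ else 0)
            + (if 0 < z ∧ -(U/2) < σ ∧ σ ≤ s z then G σ else 0) = -g' σ
          rw [if_pos ⟨hz, hσ.1, hσ.2⟩, if_neg (fun h => absurd hz (not_le.2 h.1)), add_zero,
            hGIcc σ ⟨le_trans (hs_range z).1 hσ.1.le, hσ.2⟩]
        · rw [Set.indicator_of_notMem hσ]
          show (if z ≤ 0 ∧ s z < σ ∧ σ ≤ U/2 then -G σ else 0)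
            + (if 0 < z ∧ -(U/2) < σ ∧ σ ≤ s z then G σ else 0) = 0
          rw [if_neg (fun h => hσ ⟨h.2.1, h.2.2⟩),
            if_neg (fun h => absurd hz (not_le.2 h.1)), add_zero]
      rw [hfun, integral_indicator measurableSet_Ioc, integral_neg,
        (hFTC (s z) (hs_range z)).2, neg_neg]
    · have hfun : (fun σ => F z σ) = (Set.Ioc (-(U/2)) (s z)).indicator g' := by
        funext σ
        by_cases hσ : σ ∈ Set.Ioc (-(U/2)) (s z)
        · rw [Set.indicator_of_mem hσ]
          show (if z ≤ 0 ∧ s z < σ ∧ σ ≤ U/2 then -G σ else 0)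
            + (if 0 < z ∧ -(U/2) < σ ∧ σ ≤ s z then G σ else 0) = g' σ
          rw [if_neg (fun h : z ≤ 0 ∧ s z < σ ∧ σ ≤ U/2 => absurd hz (not_lt.2 h.1)),
            if_pos ⟨hz, hσ.1, hσ.2⟩, zero_add,
            hGIcc σ ⟨hσ.1.le, le_trans hσ.2 (hs_range z).2⟩]
        · rw [Set.indicator_of_notMem hσ]
          show (if z ≤ 0 ∧ s z < σ ∧ σ ≤ U/2 then -G σ else 0)
            + (if 0 < z ∧ -(U/2) < σ ∧ σ ≤ s z then G σ else 0) = 0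
          rw [if_neg (fun h : z ≤ 0 ∧ s z < σ ∧ σ ≤ U/2 => absurd hz (not_lt.2 h.1)),
            if_neg (fun h : 0 < z ∧ -(U/2) < σ ∧ σ ≤ s z => hσ ⟨h.2.1, h.2.2⟩), zero_add]
      rw [hfun, integral_indicator measurableSet_Ioc, (hFTC (s z) (hs_range z)).1]
  -- Fubini
  have hswapF : (∫ z : ℝ, g (s z)) = ∫ σ, ∫ z, F z σ := by
    have h1 : (∫ z : ℝ, g (s z)) = ∫ z, ∫ σ, F z σ := by
      congr 1
      funext z
      exact (key_inner z).symm
    rw [h1, integral_integral_swap hFint]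
  -- comparison function
  set cR : ℝ → ℝ := fun σ => if G σ ≤ 0 then (a σ).toReal else (b σ).toReal with hcRdef
  have hcRmeas : Measurable cR :=
    Measurable.ite (measurableSet_le hGmeas measurable_const)
      hameas.ennreal_toReal hbmeas.ennreal_toReal
  have hcRnn : ∀ σ, 0 ≤ cR σ := by
    intro σ
    show (0:ℝ) ≤ if G σ ≤ 0 then (a σ).toReal else (b σ).toReal
    split <;> exact ENNReal.toReal_nonneg
  set Q : ℝ → ℝ := fun σ => |G σ| * cR σ with hQdef
  have hQmeas : Measurable Q := hGmeas.abs.mul hcRmeas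
  have hQnn : ∀ σ, 0 ≤ Q σ := fun σ => mul_nonneg (abs_nonneg _) (hcRnn σ)
  set c : ℝ → ℝ≥0∞ := fun σ => if G σ ≤ 0 then a σ else b σ with hcdef
  have hcmeas : Measurable c :=
    Measurable.ite (measurableSet_le hGmeas measurable_const) hameas hbmeas
  have hcsq : ∀ σ, c σ ^ 2 ≤ a σ ^ 2 + b σ ^ 2 := by
    intro σ
    show (if G σ ≤ 0 then a σ else b σ) ^ 2 ≤ a σ ^ 2 + b σ ^ 2
    split
    · exact le_add_right le_rfl
    · exact le_add_left le_rfl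
  -- a.e. bound P ≤ Q
  have hPle : ∀ᵐ σ : ℝ, (∫ z, F z σ) ≤ Q σ := by
    filter_upwards [hfinab] with σ hfin
    obtain ⟨ha, hb⟩ := hfin
    have hsplitfun : (fun z => F z σ)
        = fun z => (A σ).indicator (fun _ => -G σ) z + (B σ).indicator (fun _ => G σ) z := by
      funext z
      by_cases h1 : z ≤ 0 ∧ s z < σ ∧ σ ≤ U/2
      · have h1m : z ∈ A σ := h1
        have h2 : ¬(0 < z ∧ -(U/2) < σ ∧ σ ≤ s z) := fun h2 => absurd h1.1 (not_le.2 h2.1)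
        have h2m : z ∉ B σ := h2
        rw [Set.indicator_of_mem h1m, Set.indicator_of_notMem h2m, add_zero]
        show (if z ≤ 0 ∧ s z < σ ∧ σ ≤ U/2 then -G σ else 0)
          + (if 0 < z ∧ -(U/2) < σ ∧ σ ≤ s z then G σ else 0) = -G σ
        rw [if_pos h1, if_neg h2, add_zero]
      · have h1m : z ∉ A σ := h1
        by_cases h2 : 0 < z ∧ -(U/2) < σ ∧ σ ≤ s z
        · have h2m : z ∈ B σ := h2
          rw [Set.indicator_of_notMem h1m, Set.indicator_of_mem h2m, zero_add]
          show (if z ≤ 0 ∧ s z < σ ∧ σ ≤ U/2 then -G σ else 0)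
            + (if 0 < z ∧ -(U/2) < σ ∧ σ ≤ s z then G σ else 0) = G σ
          rw [if_pos h2, if_neg h1, zero_add]
        · have h2m : z ∉ B σ := h2
          rw [Set.indicator_of_notMem h1m, Set.indicator_of_notMem h2m, add_zero]
          show (if z ≤ 0 ∧ s z < σ ∧ σ ≤ U/2 then -G σ else 0)
            + (if 0 < z ∧ -(U/2) < σ ∧ σ ≤ s z then G σ else 0) = 0
          rw [if_neg h1, if_neg h2, add_zero]
    have hint1 : Integrable ((A σ).indicator fun _ => -G σ) :=
      IntegrableOn.integrable_indicator
        (integrableOn_const ha.ne) (hAmeas σ)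
    have hint2 : Integrable ((B σ).indicator fun _ => G σ) :=
      IntegrableOn.integrable_indicator
        (integrableOn_const hb.ne) (hBmeas σ)
    have hval : (∫ z, F z σ) = (a σ).toReal * (-G σ) + (b σ).toReal * G σ := by
      rw [hsplitfun, integral_add hint1 hint2,
        integral_indicator_const (-G σ) (hAmeas σ), integral_indicator_const (G σ) (hBmeas σ),
        smul_eq_mul, smul_eq_mul]
      rfl
    rw [hval]
    show (a σ).toReal * (-G σ) + (b σ).toReal * G σ
      ≤ |G σ| * (if G σ ≤ 0 then (a σ).toReal else (b σ).toReal)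
    rcases le_or_gt (G σ) 0 with hG0 | hG0
    · rw [if_pos hG0, abs_of_nonpos hG0]
      nlinarith [ENNReal.toReal_nonneg (a := b σ), ENNReal.toReal_nonneg (a := a σ)]
    · rw [if_neg (not_le.2 hG0), abs_of_pos hG0]
      nlinarith [ENNReal.toReal_nonneg (a := b σ), ENNReal.toReal_nonneg (a := a σ)]
  -- lintegral bound for Q
  have hQofReal : ∀ᵐ σ : ℝ, ENNReal.ofReal (Q σ) = (‖G σ‖₊ : ℝ≥0∞) * c σ := by
    filter_upwards [hfinab] with σ hfin
    obtain ⟨ha, hb⟩ := hfin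
    show ENNReal.ofReal (|G σ| * (if G σ ≤ 0 then (a σ).toReal else (b σ).toReal))
      = (‖G σ‖₊ : ℝ≥0∞) * (if G σ ≤ 0 then a σ else b σ)
    rw [ENNReal.ofReal_mul (abs_nonneg _), ← Real.enorm_eq_ofReal_abs, enorm_eq_nnnorm]
    congr 1
    split
    · exact ENNReal.ofReal_toReal ha.ne
    · exact ENNReal.ofReal_toReal hb.ne
  have hQbound : (∫⁻ σ, ENNReal.ofReal (Q σ))
      ≤ ENNReal.ofReal X ^ (1/2 : ℝ) * (2 * ENNReal.ofReal M) ^ (1/2 : ℝ) := by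
    rw [lintegral_congr_ae hQofReal]
    calc (∫⁻ σ, (‖G σ‖₊ : ℝ≥0∞) * c σ)
        ≤ (∫⁻ σ, ((‖G σ‖₊ : ℝ≥0∞)) ^ 2) ^ (1/2 : ℝ) * (∫⁻ σ, c σ ^ 2) ^ (1/2 : ℝ) :=
          hHolder c hcmeas
      _ ≤ ENNReal.ofReal X ^ (1/2 : ℝ) * (2 * ENNReal.ofReal M) ^ (1/2 : ℝ) := by
          rw [hG2]
          apply mul_le_mul_right
          apply ENNReal.rpow_le_rpow _ (by norm_num : (0:ℝ) ≤ 1/2)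
          exact le_trans (lintegral_mono hcsq) hab2M
  have hQint : Integrable Q := by
    refine ⟨hQmeas.aestronglyMeasurable, ?_⟩
    show (∫⁻ σ, (‖Q σ‖₊ : ℝ≥0∞)) < ⊤
    have heq : ∀ σ : ℝ, (‖Q σ‖₊ : ℝ≥0∞) = ENNReal.ofReal (Q σ) := fun σ =>
      Real.enorm_eq_ofReal (hQnn σ)
    simp_rw [heq]
    refine lt_of_le_of_lt hQbound (ENNReal.mul_lt_top ?_ ?_)
    · exact ENNReal.rpow_lt_top_of_nonneg (by norm_num) ENNReal.ofReal_ne_top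
    · exact ENNReal.rpow_lt_top_of_nonneg (by norm_num)
        (ENNReal.mul_lt_top (by norm_num) ENNReal.ofReal_lt_top).ne
  have hPQ : (∫ σ, ∫ z, F z σ) ≤ ∫ σ, Q σ :=
    integral_mono_ae hFint.integral_prod_right hQint hPle
  have hQval : (∫ σ, Q σ) = (∫⁻ σ, ENNReal.ofReal (Q σ)).toReal :=
    integral_eq_lintegral_of_nonneg_ae (Filter.Eventually.of_forall hQnn)
      hQmeas.aestronglyMeasurable
  have hfinal : (∫ σ, Q σ) ≤ Real.sqrt X * Real.sqrt (2 * M) := by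
    rw [hQval]
    have hbne : ENNReal.ofReal X ^ (1/2 : ℝ) * (2 * ENNReal.ofReal M) ^ (1/2 : ℝ) ≠ ⊤ := by
      apply ENNReal.mul_ne_top
      · exact (ENNReal.rpow_lt_top_of_nonneg (by norm_num) ENNReal.ofReal_ne_top).ne
      · exact (ENNReal.rpow_lt_top_of_nonneg (by norm_num)
          (ENNReal.mul_lt_top (by norm_num) ENNReal.ofReal_lt_top).ne).ne
    calc (∫⁻ σ, ENNReal.ofReal (Q σ)).toReal
        ≤ (ENNReal.ofReal X ^ (1/2 : ℝ) * (2 * ENNReal.ofReal M) ^ (1/2 : ℝ)).toReal :=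
          ENNReal.toReal_mono hbne hQbound
      _ = Real.sqrt X * Real.sqrt (2 * M) := by
          rw [ENNReal.toReal_mul, ← ENNReal.toReal_rpow, ← ENNReal.toReal_rpow,
            ENNReal.toReal_ofReal hX0]
          have h2M : (2 : ℝ≥0∞) * ENNReal.ofReal M = ENNReal.ofReal (2 * M) := by
            rw [ENNReal.ofReal_mul (by norm_num : (0:ℝ) ≤ 2), ENNReal.ofReal_ofNat]
          rw [h2M, ENNReal.toReal_ofReal (by linarith), Real.sqrt_eq_rpow, Real.sqrt_eq_rpow]
  -- assemble
  have hXint : (∫ ξ in (-(U/2))..(U/2), (g' ξ)^2) = X := by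
    rw [intervalIntegral.integral_of_le hu, hXdef, integral_Icc_eq_integral_Ioc]
  calc (∫ z : ℝ, g (s z)) = ∫ σ, ∫ z, F z σ := hswapF
    _ ≤ ∫ σ, Q σ := hPQ
    _ ≤ Real.sqrt X * Real.sqrt (2 * M) := hfinal
    _ = Real.sqrt (2 * ∫ ξ in (-(U/2))..(U/2), (g' ξ)^2) * Real.sqrt M := by
        rw [hXint, Real.sqrt_mul (by norm_num : (0:ℝ) ≤ 2) M,
          Real.sqrt_mul (by norm_num : (0:ℝ) ≤ 2) X]
        ring


end
end

section
/- Let U > 0 and let l : (0,∞) → (0,∞) be differentiable and satisfy the differential inequality l(t) l'(t) ≤ 1 + U l(t)/√12 for all t > 0. Then limsup_{t → ∞} l(t)/(U t) ≤ 1/(2√3). -/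
open Filter Set

private lemma sqrt12 : Real.sqrt 12 = 2 * Real.sqrt 3 := by
  rw [show (12:ℝ) = 2^2 * 3 by norm_num, Real.sqrt_mul (by positivity), Real.sqrt_sq (by norm_num)]

private lemma growth_bound
    (U : ℝ) (hU : 0 < U)
    (l : ℝ → ℝ)
    (hl_pos : ∀ t : ℝ, 0 < t → 0 < l t)
    (hl_diff : ∀ t : ℝ, 0 < t → DifferentiableAt ℝ l t)
    (hineq : ∀ t : ℝ, 0 < t → l t * deriv l t ≤ 1 + U * l t / Real.sqrt 12)
    (L s : ℝ) (hL : 0 < L) (hs : 1 / L + U / Real.sqrt 12 < s)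
    (b : ℝ) (hb : 1 ≤ b) :
    l b ≤ max (l 1) L + s * (b - 1) := by
  have hs0 : 0 < s := lt_of_le_of_lt (by positivity) hs
  have hcont : ContinuousOn l (Icc (1:ℝ) b) := fun x hx =>
    ((hl_diff x (lt_of_lt_of_le one_pos hx.1)).continuousAt).continuousWithinAt
  have hderiv : ∀ x ∈ Ico (1:ℝ) b, HasDerivWithinAt l (deriv l x) (Ici x) x := fun x hx =>
    ((hl_diff x (lt_of_lt_of_le one_pos hx.1)).hasDerivAt).hasDerivWithinAt
  have ha : l 1 ≤ max (l 1) L + s * ((1:ℝ) - 1) := by simp [le_max_left]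
  have hB : ∀ x : ℝ, HasDerivAt (fun t => max (l 1) L + s * (t - 1)) s x := by
    intro x
    simpa using ((hasDerivAt_id x).sub_const 1).const_mul s |>.const_add (max (l 1) L)
  have key : ∀ ⦃x⦄, x ∈ Icc (1:ℝ) b →
      l x ≤ (fun t => max (l 1) L + s * (t - 1)) x := by
    refine image_le_of_deriv_right_lt_deriv_boundary hcont hderiv ha hB ?_
    intro x hx heq
    have hx0 : 0 < x := lt_of_lt_of_le one_pos hx.1
    have hlx : 0 < l x := hl_pos x hx0
    have hxL : L ≤ l x := by
      rw [heq]
      have : (0:ℝ) ≤ s * (x - 1) := by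
        have := hx.1; nlinarith
      calc L ≤ max (l 1) L := le_max_right _ _
        _ ≤ _ := by linarith
    have h1 : deriv l x ≤ 1 / l x + U / Real.sqrt 12 := by
      have h := hineq x hx0
      rw [div_add_div _ _ (ne_of_gt hlx) (by positivity : Real.sqrt 12 ≠ 0)]
      rw [le_div_iff₀ (by positivity)]
      have hsq : (0:ℝ) < Real.sqrt 12 := by positivity
      have hdiv : U * l x / Real.sqrt 12 * Real.sqrt 12 = U * l x :=
        div_mul_cancel₀ _ (ne_of_gt hsq)
      nlinarith [mul_le_mul_of_nonneg_right h hsq.le]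
    have h2 : 1 / l x ≤ 1 / L := by
      apply one_div_le_one_div_of_le hL hxL
    calc deriv l x ≤ 1 / l x + U / Real.sqrt 12 := h1
      _ ≤ 1 / L + U / Real.sqrt 12 := by linarith
      _ < s := hs
  exact key (by constructor <;> linarith : b ∈ Icc (1:ℝ) b)

theorem ode_comparison_linear_growth
    (U : ℝ) (hU : 0 < U)
    (l : ℝ → ℝ)
    (hl_pos : ∀ t : ℝ, 0 < t → 0 < l t)
    (hl_diff : ∀ t : ℝ, 0 < t → DifferentiableAt ℝ l t)
    (hineq : ∀ t : ℝ, 0 < t → l t * deriv l t ≤ 1 + U * l t / Real.sqrt 12) :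
    (∀ ε > (0:ℝ), ∀ᶠ t in atTop, l t / (U * t) ≤ 1 / (2 * Real.sqrt 3) + ε) ∧
      Filter.limsup (fun t => l t / (U * t)) atTop ≤ 1 / (2 * Real.sqrt 3) := by
  have hs3 : (0:ℝ) < Real.sqrt 3 := by positivity
  have hs12 : (0:ℝ) < Real.sqrt 12 := by positivity
  have key : ∀ ε > (0:ℝ), ∀ᶠ t in atTop, l t / (U * t) ≤ 1 / (2 * Real.sqrt 3) + ε := by
    intro ε hε
    set L : ℝ := 4 / (ε * U) with hLdef
    have hL : 0 < L := by positivity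
    set s : ℝ := U / Real.sqrt 12 + ε * U / 2 with hsdef
    have hs : 1 / L + U / Real.sqrt 12 < s := by
      have : 1 / L = ε * U / 4 := by rw [hLdef]; field_simp
      rw [this, hsdef]; nlinarith
    set C : ℝ := max (l 1) L with hCdef
    have hC : 0 < C := lt_of_lt_of_le hL (le_max_right _ _)
    filter_upwards [eventually_ge_atTop (max 1 (2 * C / (ε * U)))] with b hb
    have hb1 : (1:ℝ) ≤ b := le_trans (le_max_left _ _) hb
    have hb2 : 2 * C / (ε * U) ≤ b := le_trans (le_max_right _ _) hb
    have hb0 : 0 < b := lt_of_lt_of_le one_pos hb1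
    have hbound := growth_bound U hU l hl_pos hl_diff hineq L s hL hs b hb1
    have hs0 : 0 < s := lt_of_le_of_lt (by positivity) hs
    have h1 : l b ≤ C + s * b := by
      calc l b ≤ C + s * (b - 1) := hbound
        _ ≤ C + s * b := by nlinarith
    have h2 : l b / (U * b) ≤ (C + s * b) / (U * b) :=
      div_le_div_of_nonneg_right h1 (by positivity) |>.trans_eq rfl
    have h3 : (C + s * b) / (U * b) = C / (U * b) + s / U := by
      field_simp
    have h4 : C / (U * b) ≤ ε / 2 := by
      rw [div_le_iff₀ (by positivity)]
      have : 2 * C ≤ ε * U * b := by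
        rw [div_le_iff₀ (by positivity)] at hb2; linarith
      nlinarith
    have h5 : s / U = 1 / (2 * Real.sqrt 3) + ε / 2 := by
      rw [hsdef, sqrt12]
      field_simp
    calc l b / (U * b) ≤ C / (U * b) + s / U := by rw [← h3]; exact h2
      _ ≤ ε / 2 + (1 / (2 * Real.sqrt 3) + ε / 2) := by rw [h5]; linarith
      _ = 1 / (2 * Real.sqrt 3) + ε := by ring
  refine ⟨key, ?_⟩
  have hcobdd : IsCoboundedUnder (· ≤ ·) atTop (fun t => l t / (U * t)) := by
    apply isCoboundedUnder_le_of_eventually_le (x := 0) atTop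
    filter_upwards [eventually_gt_atTop (0:ℝ)] with t ht
    exact le_of_lt (div_pos (hl_pos t ht) (by positivity))
  refine le_of_forall_pos_le_add fun ε hε => ?_
  exact limsup_le_of_le hcobdd (key ε hε)
end
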